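/- Let P be a polytope in ℝ^d = S ⊕ T (orthogonal decomposition with dim S = d_s), and let P_s be the orthogonal projection of P onto S. If (g_s ⊕ 0, g_0) defines a facet of P (i.e., it is valid for P and there exist d affinely independent points of P saturating it), then (g_s, g_0) defines a facet of P_s, i.e., it is valid for P_s and there exist d_s affinely independent points of P_s saturating it. -/

import Mathlib

open RealInnerProductSpace

/-- If the symmetric inequality `(g_s ⊕ 0, g_0)` (i.e. `g_s ∈ S`) defines a
facet of the full-dimensional polytope `P ⊆ ℝ^d` — it is valid and saturated by `d`
affinely independent points of `P` — then `(g_s, g_0)` defines a facet of the projected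
polytope `P_s`: it is valid for `P_s` and saturated by `d_s = dim S` affinely
independent points of `P_s`. -/
theorem stmt2 (d : ℕ) (S : Submodule ℝ (EuclideanSpace ℝ (Fin d)))
    (V P : Set (EuclideanSpace ℝ (Fin d))) (hV : V.Finite) (hP : P = convexHull ℝ V)
    (hfull : affineSpan ℝ P = ⊤)
    (Ps : Set (EuclideanSpace ℝ (Fin d)))
    (hPs : Ps = (fun p => (S.orthogonalProjection p : EuclideanSpace ℝ (Fin d))) '' P)
    (gs : EuclideanSpace ℝ (Fin d)) (hgs : gs ∈ S) (g0 : ℝ)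
    (hvalid : ∀ p ∈ P, ⟪gs, p⟫ ≤ g0)
    (x : Fin d → EuclideanSpace ℝ (Fin d))
    (hx : ∀ i, x i ∈ P ∧ ⟪gs, x i⟫ = g0) (hxi : AffineIndependent ℝ x) :
    (∀ q ∈ Ps, ⟪gs, q⟫ ≤ g0) ∧
      ∃ y : Fin (Module.finrank ℝ S) → EuclideanSpace ℝ (Fin d),
        (∀ i, y i ∈ Ps ∧ ⟪gs, y i⟫ = g0) ∧ AffineIndependent ℝ y := by
  classical
  have keyinner : ∀ p : EuclideanSpace ℝ (Fin d),
      ⟪gs, ((S.orthogonalProjection p : EuclideanSpace ℝ (Fin d)))⟫ = ⟪gs, p⟫ := by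
    intro p
    have h1 : p - S.orthogonalProjection p ∈ Sᗮ :=
      S.sub_starProjection_mem_orthogonal p
    have h2 := Submodule.inner_right_of_mem_orthogonal hgs h1
    rw [inner_sub_right] at h2
    linarith
  have hvalid' : ∀ q ∈ Ps, ⟪gs, q⟫ ≤ g0 := by
    intro q hq
    rw [hPs] at hq
    obtain ⟨p, hp, rfl⟩ := hq
    rw [keyinner]
    exact hvalid p hp
  refine ⟨hvalid', ?_⟩
  have hfd : Module.finrank ℝ (EuclideanSpace ℝ (Fin d)) = d := finrank_euclideanSpace_fin
  by_cases hds : Module.finrank ℝ S = 0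
  · haveI : IsEmpty (Fin (Module.finrank ℝ S)) := by rw [hds]; infer_instance
    exact ⟨fun i => isEmptyElim i, fun i => isEmptyElim i,
      affineIndependent_of_subsingleton ℝ _⟩
  · have hdsle : Module.finrank ℝ S ≤ d :=
      le_trans (Submodule.finrank_le S) (le_of_eq hfd)
    have hds1 : 1 ≤ Module.finrank ℝ S := Nat.one_le_iff_ne_zero.2 hds
    have hd : 1 ≤ d := le_trans hds1 hdsle
    set f : EuclideanSpace ℝ (Fin d) →ₗ[ℝ] EuclideanSpace ℝ (Fin d) :=
      S.subtype ∘ₗ (S.orthogonalProjection : EuclideanSpace ℝ (Fin d) →L[ℝ] S).toLinearMap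
      with hf
    have hfapp : ∀ p, f p = (S.orthogonalProjection p : EuclideanSpace ℝ (Fin d)) :=
      fun p => rfl
    set y0 : Fin d → EuclideanSpace ℝ (Fin d) := fun i => f (x i) with hy0
    have hy0mem : ∀ i, y0 i ∈ Ps ∧ ⟪gs, y0 i⟫ = g0 := by
      intro i
      constructor
      · rw [hPs]
        exact ⟨x i, (hx i).1, rfl⟩
      · exact (keyinner (x i)).trans (hx i).2
    set W : Submodule ℝ (EuclideanSpace ℝ (Fin d)) := vectorSpan ℝ (Set.range x) with hW
    have hWrank : Module.finrank ℝ W = d - 1 :=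
      hxi.finrank_vectorSpan (by rw [Fintype.card_fin]; omega)
    have hker : LinearMap.ker f = Sᗮ := by
      ext v
      simp [hf, LinearMap.mem_ker, Submodule.orthogonalProjectionOnto_eq_zero_iff, Submodule.starProjection_apply_eq_zero_iff]
    have horth : Module.finrank ℝ Sᗮ = d - Module.finrank ℝ S := by
      have := Submodule.finrank_add_finrank_orthogonal S
      rw [hfd] at this
      omega
    -- rank-nullity for f restricted to W
    have hrn := LinearMap.finrank_range_add_finrank_ker (f.domRestrict W)
    have hkerle : Module.finrank ℝ (LinearMap.ker (f.domRestrict W)) ≤ Module.finrank ℝ Sᗮ := by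
      rw [← Submodule.finrank_map_subtype_eq W (LinearMap.ker (f.domRestrict W))]
      apply Submodule.finrank_mono
      rintro v ⟨⟨w, hw⟩, hwker, rfl⟩
      simp only [SetLike.mem_coe, LinearMap.mem_ker, LinearMap.domRestrict_apply] at hwker
      show w ∈ Sᗮ
      rw [← hker]
      exact hwker
    have hrange : LinearMap.range (f.domRestrict W) = Submodule.map f W :=
      LinearMap.range_domRestrict W f
    have hmapvs : Submodule.map f W = vectorSpan ℝ (Set.range y0) := by
      have h := AffineMap.vectorSpan_image_eq_submodule_map (f := f.toAffineMap)
        (s := Set.range x) (k := ℝ)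
      simp only [LinearMap.toAffineMap_linear] at h
      rw [hW, h]
      congr 1
      rw [hy0, ← Set.range_comp]
      rfl
    have hrankge : Module.finrank ℝ S - 1 ≤ Module.finrank ℝ (vectorSpan ℝ (Set.range y0)) := by
      rw [← hmapvs, ← hrange]
      omega
    obtain ⟨t, hts, hspan, hind⟩ :=
      exists_affineIndependent ℝ (EuclideanSpace ℝ (Fin d)) (Set.range y0)
    have htfin : t.Finite := (Set.finite_range y0).subset hts
    haveI : Fintype t := htfin.fintype
    have hvs : vectorSpan ℝ t = vectorSpan ℝ (Set.range y0) := by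
      rw [← direction_affineSpan, hspan, direction_affineSpan]
    have htne : t.Nonempty := by
      rcases Set.eq_empty_or_nonempty t with h | h
      · exfalso
        haveI : Nonempty (Fin d) := ⟨⟨0, hd⟩⟩
        have hy0ne : (Set.range y0).Nonempty := Set.range_nonempty _
        have : (affineSpan ℝ (Set.range y0) : Set (EuclideanSpace ℝ (Fin d))).Nonempty :=
          hy0ne.mono (subset_affineSpan ℝ _)
        rw [← hspan, h] at this
        simp at this
      · exact h
    haveI : Nonempty t := htne.to_subtype
    have hcardpos : 1 ≤ Fintype.card t := Fintype.card_pos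
    have hcardle := finrank_vectorSpan_range_le ℝ ((↑) : t → EuclideanSpace ℝ (Fin d))
      (n := Fintype.card t - 1) (Nat.succ_pred_eq_of_pos hcardpos).symm
    rw [Subtype.range_coe, hvs] at hcardle
    have hle : Module.finrank ℝ S ≤ Fintype.card t := by
      have h1 : Module.finrank ℝ S - 1 ≤ Fintype.card t - 1 := le_trans hrankge hcardle
      calc Module.finrank ℝ S = Module.finrank ℝ S - 1 + 1 :=
            (Nat.succ_pred_eq_of_pos hds1).symm
        _ ≤ Fintype.card t - 1 + 1 := Nat.add_le_add_right h1 1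
        _ = Fintype.card t := Nat.succ_pred_eq_of_pos hcardpos
    have hcard : Fintype.card (Fin (Module.finrank ℝ S)) ≤ Fintype.card t := by
      rwa [Fintype.card_fin]
    obtain ⟨e⟩ := Function.Embedding.nonempty_of_card_le hcard
    refine ⟨fun i => (e i : EuclideanSpace ℝ (Fin d)), ?_, hind.comp_embedding e⟩
    intro i
    obtain ⟨j, hj⟩ := hts (e i).2
    show (e i : EuclideanSpace ℝ (Fin d)) ∈ Ps ∧ ⟪gs, (e i : EuclideanSpace ℝ (Fin d))⟫ = g0
    rw [← hj]
    exact hy0mem j
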